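/- Every Hamming (t, T)-light complete traceability code is a Euclidean (t, δ)-light complete traceability code with δ = sqrt(2T)/(2t(t-1)), for t ≥ 2. -/

import Mathlib

open Finset

/-- Result of the averaging attack: the average of the columns of `H` indexed by `I`. -/
noncomputable def avgCols {n M : ℕ} (H : Fin n → Fin M → ℝ) (I : Finset (Fin M)) : Fin n → ℝ :=
  fun j => (I.card : ℝ)⁻¹ * ∑ i ∈ I, H j i

/-- `H` has entries in `{0, 1}`. -/
def IsBinaryMatrix {n M : ℕ} (H : Fin n → Fin M → ℝ) : Prop :=
  ∀ j i, H j i = 0 ∨ H j i = 1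

/-- `H` is a Hamming `(t, T)`-light complete traceability code: the averaged columns of
any two distinct coalitions of size at most `t` differ in more than `2T` coordinates. -/
def IsHammingLCT {n M : ℕ} (H : Fin n → Fin M → ℝ) (t T : ℕ) : Prop :=
  ∀ I₁ I₂ : Finset (Fin M), I₁.Nonempty → I₂.Nonempty → I₁ ≠ I₂ →
    I₁.card ≤ t → I₂.card ≤ t →
    2 * T < (Finset.univ.filter (fun j => avgCols H I₁ j ≠ avgCols H I₂ j)).card

/-- `H` is a Euclidean `(t, δ)`-light complete traceability code: the averaged columns of
any two distinct coalitions of size at most `t` are at Euclidean distance more than `2δ`. -/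
def IsEuclideanLCT {n M : ℕ} (H : Fin n → Fin M → ℝ) (t : ℕ) (δ : ℝ) : Prop :=
  ∀ I₁ I₂ : Finset (Fin M), I₁.Nonempty → I₂.Nonempty → I₁ ≠ I₂ →
    I₁.card ≤ t → I₂.card ≤ t →
    2 * δ < Real.sqrt (∑ j, (avgCols H I₁ j - avgCols H I₂ j) ^ 2)

lemma sum_binary_int {n M : ℕ} (H : Fin n → Fin M → ℝ) (hbin : IsBinaryMatrix H)
    (j : Fin n) (I : Finset (Fin M)) :
    ∃ a : ℤ, ∑ i ∈ I, H j i = (a : ℝ) := by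
  induction I using Finset.induction with
  | empty => exact ⟨0, by simp⟩
  | @insert i s hi ih =>
    obtain ⟨a, ha⟩ := ih
    rcases hbin j i with h0 | h1
    · exact ⟨a, by rw [Finset.sum_insert hi, h0, ha]; ring⟩
    · exact ⟨a + 1, by rw [Finset.sum_insert hi, h1, ha]; push_cast; ring⟩

lemma int_div_bound (k : ℤ) (d : ℕ) (hd : 0 < d) (hx : (k : ℝ) / d ≠ 0) :
    (1 : ℝ) / d ≤ |(k : ℝ) / d| := by
  have hk : k ≠ 0 := by intro h; apply hx; simp [h]
  have h1 : (1 : ℝ) ≤ |(k : ℝ)| := by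
    have := Int.one_le_abs hk
    calc (1:ℝ) ≤ (|k| : ℤ) := by exact_mod_cast this
    _ = |(k:ℝ)| := by push_cast; ring
  have hd' : (0:ℝ) < d := by exact_mod_cast hd
  rw [abs_div, abs_of_pos hd']
  gcongr

lemma coord_bound {n M t : ℕ} (ht : 2 ≤ t) (H : Fin n → Fin M → ℝ)
    (hbin : IsBinaryMatrix H)
    (I₁ I₂ : Finset (Fin M)) (h1 : I₁.Nonempty) (h2 : I₂.Nonempty)
    (hc1 : I₁.card ≤ t) (hc2 : I₂.card ≤ t) (j : Fin n)
    (hne : avgCols H I₁ j ≠ avgCols H I₂ j) :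
    (1 / (t * (t - 1)) : ℝ) ≤ |avgCols H I₁ j - avgCols H I₂ j| := by
  obtain ⟨a, ha⟩ := sum_binary_int H hbin j I₁
  obtain ⟨b, hb⟩ := sum_binary_int H hbin j I₂
  set p := I₁.card with hp
  set q := I₂.card with hq
  have hp0 : 0 < p := Finset.card_pos.2 h1
  have hq0 : 0 < q := Finset.card_pos.2 h2
  -- express difference as integer over a denominator d ≤ t*(t-1)
  have key : ∃ (k : ℤ) (d : ℕ), 0 < d ∧ d ≤ t * (t - 1) ∧
      avgCols H I₁ j - avgCols H I₂ j = (k : ℝ) / d := by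
    by_cases hpq : p = q
    · refine ⟨a - b, p, hp0, ?_, ?_⟩
      · calc p ≤ t := hc1
        _ ≤ t * (t - 1) := Nat.le_mul_of_pos_right t (by omega)
      · simp only [avgCols, ha, hb, ← hp, ← hq, ← hpq]
        have : (p : ℝ) ≠ 0 := by positivity
        push_cast
        field_simp
    · refine ⟨a * q - b * p, p * q, Nat.mul_pos hp0 hq0, ?_, ?_⟩
      · rcases Nat.lt_or_ge p q with h | h
        · have : p ≤ t - 1 := by omega
          calc p * q ≤ (t - 1) * t := Nat.mul_le_mul this hc2
          _ = t * (t - 1) := Nat.mul_comm _ _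
        · have hqp : q < p := by omega
          have : q ≤ t - 1 := by omega
          exact Nat.mul_le_mul hc1 this
      · simp only [avgCols, ha, hb, ← hp, ← hq]
        have h1' : (p : ℝ) ≠ 0 := by positivity
        have h2' : (q : ℝ) ≠ 0 := by positivity
        push_cast
        field_simp
  obtain ⟨k, d, hd0, hdle, hEq⟩ := key
  rw [hEq]
  refine le_trans ?_ (int_div_bound k d hd0 (hEq ▸ sub_ne_zero.2 hne))
  have hd' : (0:ℝ) < d := by exact_mod_cast hd0
  have htt : (0:ℝ) < (t : ℝ) * ((t:ℝ) - 1) := by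
    have : (2:ℝ) ≤ t := by exact_mod_cast ht
    nlinarith
  have : (d : ℝ) ≤ (t : ℝ) * ((t:ℝ) - 1) := by
    have h1 : (d : ℝ) ≤ ((t * (t-1) : ℕ) : ℝ) := by exact_mod_cast hdle
    have h2 : ((t * (t-1) : ℕ) : ℝ) = (t:ℝ) * ((t:ℝ) - 1) := by
      have : 1 ≤ t := by omega
      push_cast [Nat.cast_sub this]
      ring
    linarith
  gcongr

theorem hamming_to_euclidean_LCT {n M t T : ℕ} (ht : 2 ≤ t)
    (H : Fin n → Fin M → ℝ) (hbin : IsBinaryMatrix H)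
    (hH : IsHammingLCT H t T) :
    IsEuclideanLCT H t (Real.sqrt (2 * T) / (2 * t * (t - 1))) := by
  intro I₁ I₂ h1 h2 hI hc1 hc2
  have hcard := hH I₁ I₂ h1 h2 hI hc1 hc2
  set S := Finset.univ.filter (fun j => avgCols H I₁ j ≠ avgCols H I₂ j) with hS
  set c : ℝ := 1 / ((t:ℝ) * ((t:ℝ) - 1)) with hc
  have ht2 : (2:ℝ) ≤ (t:ℝ) := by exact_mod_cast ht
  have htt : (0:ℝ) < (t:ℝ) * ((t:ℝ) - 1) := by nlinarith
  have hcpos : 0 < c := by rw [hc]; positivity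
  have hsum : (2 * T + 1 : ℝ) * c ^ 2 ≤ ∑ j, (avgCols H I₁ j - avgCols H I₂ j) ^ 2 := by
    have hsub : ∑ j ∈ S, (avgCols H I₁ j - avgCols H I₂ j) ^ 2 ≤
        ∑ j, (avgCols H I₁ j - avgCols H I₂ j) ^ 2 :=
      Finset.sum_le_sum_of_subset_of_nonneg (Finset.subset_univ S) (fun j _ _ => sq_nonneg _)
    have hlow : (S.card : ℝ) * c ^ 2 ≤ ∑ j ∈ S, (avgCols H I₁ j - avgCols H I₂ j) ^ 2 := by
      calc (S.card : ℝ) * c ^ 2 = ∑ _j ∈ S, c ^ 2 := by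
            rw [Finset.sum_const, nsmul_eq_mul]
      _ ≤ _ := Finset.sum_le_sum (fun j hj => by
          have hjne : avgCols H I₁ j ≠ avgCols H I₂ j := (Finset.mem_filter.1 hj).2
          have hcb := coord_bound ht H hbin I₁ I₂ h1 h2 hc1 hc2 j hjne
          calc c ^ 2 ≤ |avgCols H I₁ j - avgCols H I₂ j| ^ 2 :=
                pow_le_pow_left₀ hcpos.le (hc ▸ hcb) 2
          _ = _ := sq_abs _)
    have h3 : (2 * T + 1 : ℝ) ≤ (S.card : ℝ) := by exact_mod_cast hcard
    have := mul_le_mul_of_nonneg_right h3 (sq_nonneg c)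
    linarith
  have hLHS : 2 * (Real.sqrt (2 * T) / (2 * t * ((t:ℝ) - 1))) = Real.sqrt (2 * T) * c := by
    set s := Real.sqrt (2 * T) with hs
    have ht0 : (t:ℝ) ≠ 0 := by positivity
    have ht1 : (t:ℝ) - 1 ≠ 0 := by nlinarith
    rw [hc]
    field_simp
  rw [hLHS]
  calc Real.sqrt (2 * T) * c < Real.sqrt (2 * T + 1) * c :=
        mul_lt_mul_of_pos_right (Real.sqrt_lt_sqrt (by positivity) (by norm_num)) hcpos
  _ = Real.sqrt ((2 * T + 1) * c ^ 2) := by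
        rw [Real.sqrt_mul (by positivity), Real.sqrt_sq hcpos.le]
  _ ≤ _ := Real.sqrt_le_sqrt hsum
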